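/- For y = [a, b]ᵀ with a, b > 0 and θ ∈ (0, π/2], yᵀ M(θ) y > 0, where M(θ) = (1/2)·[[sin 2θ + 2π − 2θ, −(2π−θ)cos θ − sin θ], [−(2π−θ)cos θ − sin θ, 2π]]. -/

import Mathlib

open Matrix

theorem quadratic_form_pos (a b θ : ℝ) (ha : 0 < a) (hb : 0 < b)
    (h0 : 0 < θ) (h1 : θ ≤ Real.pi / 2) :
    0 < dotProduct ![a, b]
        ((((1 : ℝ) / 2) •
          !![Real.sin (2 * θ) + 2 * Real.pi - 2 * θ,
             -((2 * Real.pi - θ) * Real.cos θ) - Real.sin θ;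
             -((2 * Real.pi - θ) * Real.cos θ) - Real.sin θ,
             2 * Real.pi] : Matrix (Fin 2) (Fin 2) ℝ).mulVec ![a, b]) := by
  have hpi := Real.pi_gt_three
  set s := Real.sin θ with hs
  set c := Real.cos θ with hc
  have hsc : s ^ 2 + c ^ 2 = 1 := by rw [hs, hc]; exact Real.sin_sq_add_cos_sq θ
  have hs0 : 0 < s := Real.sin_pos_of_pos_of_lt_pi h0 (by linarith)
  have hc0 : 0 ≤ c := Real.cos_nonneg_of_mem_Icc ⟨by linarith, h1⟩
  have hslt : s < θ := Real.sin_lt h0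
  have hjordan : 2 / Real.pi * θ ≤ s := Real.mul_le_sin (le_of_lt h0) h1
  have hjordan' : 2 * θ ≤ Real.pi * s := by
    have h := mul_le_mul_of_nonneg_left hjordan (le_of_lt Real.pi_pos)
    field_simp at h
    linarith
  have hsin2 : Real.sin (2 * θ) = 2 * s * c := by
    rw [Real.sin_two_mul, hs, hc]
  -- determinant positivity: 2π(2sc + 2π - 2θ) > ((2π-θ)c + s)^2
  have hdet : ((2 * Real.pi - θ) * c + s) ^ 2 <
      2 * Real.pi * (2 * s * c + 2 * Real.pi - 2 * θ) := by
    nlinarith [sq_nonneg (Real.pi * s - θ), sq_nonneg c, sq_nonneg (s*c), hs0.le,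
      mul_nonneg hs0.le hc0, sq_nonneg (Real.pi - θ), mul_pos h0 hs0,
      mul_nonneg (mul_nonneg h0.le hc0) hs0.le, sq_nonneg (2*Real.pi - θ)]
  simp only [dotProduct, Matrix.mulVec, Matrix.smul_apply, Fin.sum_univ_two,
    Matrix.cons_val_zero, Matrix.cons_val_one, Matrix.head_cons, Matrix.cons_val',
    Matrix.empty_val', Matrix.cons_val_fin_one, Matrix.head_fin_const, smul_eq_mul,
    Matrix.of_apply, Matrix.cons_dotProduct, Matrix.dotProduct_of_isEmpty]
  rw [hsin2]
  nlinarith [sq_nonneg (2 * Real.pi * b - ((2 * Real.pi - θ) * c + s) * a),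
    mul_pos (mul_pos ha ha) (sub_pos.mpr hdet), Real.pi_pos]
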